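/- If p is a probability vector such that the Lyapunov exponent ∫ log|T′| dμ_p is infinite, then for every λ > 0 the set E_λ has full μ_p-measure: μ_p(E_λ) = 1. -/

import Mathlib

open MeasureTheory Filter Set
open scoped ENNReal

instance : MeasurableSpace ℕ+ := ⊤

/-- The Gauss map `T x = 1/x - ⌊1/x⌋` (with `T 0 = 0`). -/
noncomputable def gaussMap (x : ℝ) : ℝ := if x = 0 then 0 else Int.fract x⁻¹

/-- Finite continued fraction approximants: `cfApprox n a` is the value of the
continued fraction `1/(a 0 + 1/(a 1 + ⋯))` truncated after `n` levels. -/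
noncomputable def cfApprox : ℕ → (ℕ → ℕ+) → ℝ
  | 0, _ => 0
  | n + 1, a => (((a 0 : ℕ) : ℝ) + cfApprox n (fun k => a (k + 1)))⁻¹

/-- The continued fraction coding map `Π : ℕ^ℕ → [0,1] ∖ ℚ`. -/
noncomputable def cfVal (a : ℕ → ℕ+) : ℝ := limUnder atTop (fun n => cfApprox n a)

/-- `p` is a countable probability vector `(p_n)_{n ≥ 1}`. -/
def IsProbVec (p : ℕ+ → ℝ) : Prop := (∀ n, 0 ≤ p n) ∧ HasSum p 1

/-- `m` is the Bernoulli product measure on `ℕ^ℕ` with weights `p`: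
it assigns to each cylinder the product of the weights of its digits. -/
def IsBernoulli (p : ℕ+ → ℝ) (m : Measure (ℕ → ℕ+)) : Prop :=
  ∀ (n : ℕ) (i : ℕ → ℕ+),
    m {a | ∀ k < n, a k = i k} = ENNReal.ofReal (∏ k ∈ Finset.range n, p (i k))

/-- Hausdorff dimension of a measure: `inf { dim_H A : μ A = 1 }`. -/
noncomputable def dimMeasure (μ : Measure ℝ) : ℝ≥0∞ :=
  ⨅ (A : Set ℝ) (_ : μ A = 1), dimH A


/-- The `k`-th continued fraction digit of `x`: `i_{k+1} = ⌊1/(T^k x)⌋`. -/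
noncomputable def cfDigit (x : ℝ) (k : ℕ) : ℕ := ⌊(gaussMap^[k] x)⁻¹⌋₊

/-- `J_n(x)`: the level-`n` projected cylinder containing `x`, i.e. the set of
irrationals of `(0,1)` whose first `n` continued fraction digits agree with those of `x`. -/
def levelCyl (n : ℕ) (x : ℝ) : Set ℝ :=
  {y | y ∈ Set.Ioo (0 : ℝ) 1 ∧ Irrational y ∧ ∀ k < n, cfDigit y k = cfDigit x k}

/-- The set `E_λ = ⋂_j ⋃_{n ≥ j} { x ∈ (0,1) : |J_n(x)| ≤ exp (-λ n) }`. -/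
def Eset (lam : ℝ) : Set ℝ :=
  {x | x ∈ Set.Ioo (0 : ℝ) 1 ∧ Irrational x ∧
    ∀ j : ℕ, ∃ n, j ≤ n ∧ Metric.diam (levelCyl n x) ≤ Real.exp (-lam * n)}


namespace CFAux

/-- continued fraction with tail value `z`. -/
noncomputable def tailVal : ℕ → (ℕ → ℕ+) → ℝ → ℝ
  | 0, _, z => z
  | n + 1, a, z => (((a 0 : ℕ) : ℝ) + tailVal n (fun k => a (k + 1)) z)⁻¹

lemma one_le_coe (i : ℕ+) : (1 : ℝ) ≤ ((i : ℕ) : ℝ) := by exact_mod_cast i.one_le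

lemma tailVal_mem (n : ℕ) (a : ℕ → ℕ+) {z : ℝ} (hz : z ∈ Set.Icc (0:ℝ) 1) :
    tailVal n a z ∈ Set.Icc (0:ℝ) 1 := by
  induction n generalizing a with
  | zero => exact hz
  | succ n ih =>
    obtain ⟨h0, h1⟩ := ih (fun k => a (k+1))
    have h2 : (1:ℝ) ≤ ((a 0 : ℕ) : ℝ) + tailVal n (fun k => a (k + 1)) z := by
      have := one_le_coe (a 0); linarith
    constructor
    · simp only [tailVal]; positivity
    · simp only [tailVal]
      rw [inv_le_one_iff₀]; right; exact h2

lemma tailVal_lip : ∀ (n : ℕ) (a : ℕ → ℕ+) (z w : ℝ), z ∈ Set.Icc (0:ℝ) 1 →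
    w ∈ Set.Icc (0:ℝ) 1 →
    |tailVal n a z - tailVal n a w| ≤ 2 * (1/2)^n * |z - w|
  | 0, a, z, w, hz, hw => by simp only [tailVal, pow_zero, mul_one]; nlinarith [abs_nonneg (z - w)]
  | 1, a, z, w, hz, hw => by
    have h1 : (1:ℝ) ≤ ((a 0 : ℕ) : ℝ) := one_le_coe _
    have hz0 := hz.1; have hw0 := hw.1
    have hdz : (0:ℝ) < (a 0 : ℕ) + z := by linarith
    have hdw : (0:ℝ) < (a 0 : ℕ) + w := by linarith
    simp only [tailVal]
    rw [inv_sub_inv (by positivity) (by positivity), abs_div]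
    rw [div_le_iff₀ (by positivity)]
    have h2 : |(((a 0:ℕ):ℝ) + w) - ((a 0:ℕ) + z)| = |z - w| := by
      rw [← abs_neg]; ring_nf
    rw [h2, abs_mul]
    have h3 : (1:ℝ) ≤ |((a 0:ℕ):ℝ) + z| * |((a 0:ℕ):ℝ) + w| := by
      rw [abs_of_pos hdz, abs_of_pos hdw]
      nlinarith
    nlinarith [abs_nonneg (z - w), abs_nonneg (((a 0:ℕ):ℝ) + z), abs_nonneg (((a 0:ℕ):ℝ) + w),
      mul_nonneg (abs_nonneg (z-w)) (sub_nonneg.2 h3)]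
  | (n+2), a, z, w, hz, hw => by
    have ih := tailVal_lip n (fun k => a (k+2)) z w hz hw
    -- tailVal (n+2) a z = f (a 0) (f (a 1) (tailVal n (shift² a) z))
    set u := tailVal n (fun k => a (k+2)) z with hu
    set v := tailVal n (fun k => a (k+2)) w with hv
    have hu01 : u ∈ Set.Icc (0:ℝ) 1 := tailVal_mem n _ hz
    have hv01 : v ∈ Set.Icc (0:ℝ) 1 := tailVal_mem n _ hw
    have ha0 : (1:ℝ) ≤ ((a 0 : ℕ) : ℝ) := one_le_coe _
    have ha1 : (1:ℝ) ≤ ((a 1 : ℕ) : ℝ) := one_le_coe _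
    have key : ∀ s t : ℝ, s ∈ Set.Icc (0:ℝ) 1 → t ∈ Set.Icc (0:ℝ) 1 →
        |(((a 0:ℕ):ℝ) + (((a 1:ℕ):ℝ) + s)⁻¹)⁻¹ - (((a 0:ℕ):ℝ) + (((a 1:ℕ):ℝ) + t)⁻¹)⁻¹|
          ≤ (1/4) * |s - t| := by
      intro s t hs ht
      have hs0 := hs.1; have ht0 := ht.1
      have h1s : (0:ℝ) < (a 1 : ℕ) + s := by linarith
      have h1t : (0:ℝ) < (a 1 : ℕ) + t := by linarith
      have hfs : (0:ℝ) < (((a 1:ℕ):ℝ) + s)⁻¹ := by positivity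
      have hft : (0:ℝ) < (((a 1:ℕ):ℝ) + t)⁻¹ := by positivity
      have h0s : (0:ℝ) < ((a 0:ℕ):ℝ) + (((a 1:ℕ):ℝ) + s)⁻¹ := by linarith
      have h0t : (0:ℝ) < ((a 0:ℕ):ℝ) + (((a 1:ℕ):ℝ) + t)⁻¹ := by linarith
      rw [inv_sub_inv (ne_of_gt h0s) (ne_of_gt h0t), abs_div, div_le_iff₀ (by positivity)]
      have hnum : ((((a 0:ℕ):ℝ) + (((a 1:ℕ):ℝ) + t)⁻¹) - (((a 0:ℕ):ℝ) + (((a 1:ℕ):ℝ) + s)⁻¹))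
          = (((a 1:ℕ):ℝ) + t)⁻¹ - (((a 1:ℕ):ℝ) + s)⁻¹ := by ring
      rw [hnum, inv_sub_inv (ne_of_gt h1t) (ne_of_gt h1s), abs_div]
      rw [div_le_iff₀ (by positivity)]
      -- |s - t| ≤ (1/4)|s-t| * |(a0+fs)(a0+ft)| * |(a1+t)(a1+s)|
      have e1 : |(((a 1:ℕ):ℝ) + s) - (((a 1:ℕ):ℝ) + t)| = |s - t| := by ring_nf
      rw [e1]
      have hb1 : (2:ℝ) ≤ |((a 0:ℕ):ℝ) + (((a 1:ℕ):ℝ) + s)⁻¹| * |((a 1:ℕ):ℝ) + s| := by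
        rw [abs_of_pos h0s, abs_of_pos h1s]
        have : (((a 1:ℕ):ℝ) + s)⁻¹ * (((a 1:ℕ):ℝ) + s) = 1 := inv_mul_cancel₀ (ne_of_gt h1s)
        nlinarith
      have hb2 : (2:ℝ) ≤ |((a 0:ℕ):ℝ) + (((a 1:ℕ):ℝ) + t)⁻¹| * |((a 1:ℕ):ℝ) + t| := by
        rw [abs_of_pos h0t, abs_of_pos h1t]
        have : (((a 1:ℕ):ℝ) + t)⁻¹ * (((a 1:ℕ):ℝ) + t) = 1 := inv_mul_cancel₀ (ne_of_gt h1t)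
        nlinarith
      rw [abs_mul, abs_mul]
      have h4 : (4:ℝ) ≤ (|((a 0:ℕ):ℝ) + (((a 1:ℕ):ℝ) + s)⁻¹| * |((a 1:ℕ):ℝ) + s|) *
          (|((a 0:ℕ):ℝ) + (((a 1:ℕ):ℝ) + t)⁻¹| * |((a 1:ℕ):ℝ) + t|) := by
        nlinarith
      nlinarith [abs_nonneg (s - t), mul_nonneg (abs_nonneg (s - t)) (sub_nonneg.2 h4)]
    have step : tailVal (n+2) a z = (((a 0:ℕ):ℝ) + (((a 1:ℕ):ℝ) + u)⁻¹)⁻¹ := by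
      simp only [tailVal]; rfl
    have stepw : tailVal (n+2) a w = (((a 0:ℕ):ℝ) + (((a 1:ℕ):ℝ) + v)⁻¹)⁻¹ := by
      simp only [tailVal]; rfl
    rw [step, stepw]
    calc |(((a 0:ℕ):ℝ) + (((a 1:ℕ):ℝ) + u)⁻¹)⁻¹ - (((a 0:ℕ):ℝ) + (((a 1:ℕ):ℝ) + v)⁻¹)⁻¹|
        ≤ (1/4) * |u - v| := key u v hu01 hv01
      _ ≤ (1/4) * (2 * (1/2)^n * |z - w|) := by
          have := abs_nonneg (u - v); nlinarith
      _ = 2 * (1/2)^(n+2) * |z - w| := by ring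

end CFAux
namespace CFAux

lemma cfApprox_eq_tailVal (n : ℕ) (a : ℕ → ℕ+) : cfApprox n a = tailVal n a 0 := by
  induction n generalizing a with
  | zero => rfl
  | succ n ih => simp only [cfApprox, tailVal, ih]

lemma cfApprox_mem (n : ℕ) (a : ℕ → ℕ+) : cfApprox n a ∈ Set.Icc (0:ℝ) 1 := by
  rw [cfApprox_eq_tailVal]; exact tailVal_mem n a (by norm_num)

lemma shift_iterate (n : ℕ) (a : ℕ → ℕ+) (k : ℕ) :
    (fun b : ℕ → ℕ+ => fun j => b (j+1))^[n] a k = a (k + n) := by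
  induction n generalizing a k with
  | zero => rfl
  | succ n ih => rw [Function.iterate_succ_apply, ih]; ring_nf

lemma cfApprox_add (n m : ℕ) (a : ℕ → ℕ+) :
    cfApprox (n + m) a = tailVal n a (cfApprox m ((fun b : ℕ → ℕ+ => fun j => b (j+1))^[n] a)) := by
  induction n generalizing a with
  | zero => simp [tailVal]
  | succ n ih =>
    have : n + 1 + m = (n + m) + 1 := by ring
    rw [this]
    simp only [cfApprox, tailVal]
    rw [ih (fun k => a (k+1))]
    congr 1

lemma cauchy_cfApprox (a : ℕ → ℕ+) : CauchySeq (fun n => cfApprox n a) := by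
  apply cauchySeq_of_le_geometric (1/2 : ℝ) 2 (by norm_num)
  intro n
  rw [Real.dist_eq]
  have h1 := cfApprox_add n 1 a
  have h2 : cfApprox n a = tailVal n a 0 := cfApprox_eq_tailVal n a
  have := tailVal_lip n a 0 (cfApprox 1 ((fun b : ℕ → ℕ+ => fun j => b (j+1))^[n] a))
    (by norm_num) (cfApprox_mem _ _)
  rw [show n + 1 = n + 1 from rfl] at h1
  calc |cfApprox n a - cfApprox (n+1) a| =
      |tailVal n a 0 - tailVal n a (cfApprox 1 ((fun b : ℕ → ℕ+ => fun j => b (j+1))^[n] a))| := by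
        rw [h1, h2]
    _ ≤ 2 * (1/2)^n * |0 - cfApprox 1 ((fun b : ℕ → ℕ+ => fun j => b (j+1))^[n] a)| := this
    _ ≤ 2 * (1/2)^n := by
        have h3 := cfApprox_mem 1 ((fun b : ℕ → ℕ+ => fun j => b (j+1))^[n] a)
        have h4 : |0 - cfApprox 1 ((fun b : ℕ → ℕ+ => fun j => b (j+1))^[n] a)| ≤ 1 := by
          rw [abs_sub_comm]; rw [abs_of_nonneg (by simpa using h3.1)]; simpa using h3.2
        nlinarith [pow_pos (show (0:ℝ) < 1/2 by norm_num) n]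

lemma tendsto_cfVal (a : ℕ → ℕ+) :
    Filter.Tendsto (fun n => cfApprox n a) Filter.atTop (nhds (cfVal a)) :=
  (cauchy_cfApprox a).tendsto_limUnder

lemma cfVal_mem (a : ℕ → ℕ+) : cfVal a ∈ Set.Icc (0:ℝ) 1 := by
  constructor
  · exact ge_of_tendsto (tendsto_cfVal a) (Filter.Eventually.of_forall fun n => (cfApprox_mem n a).1)
  · exact le_of_tendsto (tendsto_cfVal a) (Filter.Eventually.of_forall fun n => (cfApprox_mem n a).2)

lemma cfVal_rec (a : ℕ → ℕ+) : cfVal a = (((a 0 : ℕ) : ℝ) + cfVal (fun k => a (k+1)))⁻¹ := by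
  have h1 : Filter.Tendsto (fun n => cfApprox (n+1) a) Filter.atTop (nhds (cfVal a)) :=
    (tendsto_cfVal a).comp (Filter.tendsto_add_atTop_nat 1)
  have h2 : Filter.Tendsto (fun n => (((a 0 : ℕ) : ℝ) + cfApprox n (fun k => a (k+1)))⁻¹)
      Filter.atTop (nhds ((((a 0 : ℕ) : ℝ) + cfVal (fun k => a (k+1)))⁻¹)) := by
    apply Filter.Tendsto.inv₀
    · exact (tendsto_const_nhds).add (tendsto_cfVal _)
    · have := (cfVal_mem (fun k => a (k+1))).1
      have := one_le_coe (a 0)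
      intro h; linarith [h]
  have h3 : (fun n => cfApprox (n+1) a) =
      (fun n => (((a 0 : ℕ) : ℝ) + cfApprox n (fun k => a (k+1)))⁻¹) := by
    funext n; rfl
  rw [h3] at h1
  exact tendsto_nhds_unique h1 h2

lemma cfVal_pos (a : ℕ → ℕ+) : 0 < cfVal a := by
  rw [cfVal_rec a]
  have h1 := one_le_coe (a 0)
  have h2 := (cfVal_mem (fun k => a (k+1))).1
  positivity

lemma cfVal_lt_one (a : ℕ → ℕ+) : cfVal a < 1 := by
  rw [cfVal_rec a]
  have h1 := one_le_coe (a 0)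
  have h2 := cfVal_pos (fun k => a (k+1))
  rw [inv_lt_one_iff₀]; right; linarith

end CFAux
namespace CFAux

lemma cfVal_irrational (a : ℕ → ℕ+) : Irrational (cfVal a) := by
  rintro ⟨r, hr⟩
  -- descent on denominator: cfVal a ≠ p / q for all integers p, naturals q ≥ 1
  have key : ∀ q : ℕ, ∀ a : ℕ → ℕ+, ∀ p : ℤ, 0 < q → cfVal a ≠ (p : ℝ) / (q : ℝ) := by
    intro q
    induction q using Nat.strong_induction_on with
    | _ q ih =>
      intro a p hq heq
      have hx0 := cfVal_pos a
      have hx1 := cfVal_lt_one a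
      have hq0 : (0:ℝ) < (q:ℝ) := by exact_mod_cast hq
      have hp0 : (0:ℝ) < (p:ℝ) := by
        by_contra h
        push_neg at h
        have : (p:ℝ)/(q:ℝ) ≤ 0 := div_nonpos_of_nonpos_of_nonneg h hq0.le
        linarith [heq ▸ hx0]
      have hpq : (p:ℝ) < (q:ℝ) := by
        have : (p:ℝ)/(q:ℝ) < 1 := heq ▸ hx1
        calc (p:ℝ) = (p:ℝ)/(q:ℝ) * q := by field_simp
          _ < 1 * q := by exact mul_lt_mul_of_pos_right this hq0
          _ = q := one_mul _
      have hpnat : 0 < p.toNat := by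
        have : 0 < p := by exact_mod_cast hp0
        omega
      have hplt : p.toNat < q := by
        have : p < (q:ℤ) := by exact_mod_cast hpq
        omega
      -- cfVal (shift a) = (q - a0 * p) / p
      have hrec := cfVal_rec a
      have hsum : ((a 0 : ℕ) : ℝ) + cfVal (fun k => a (k+1)) = (q:ℝ)/(p:ℝ) := by
        have hne : cfVal a ≠ 0 := ne_of_gt hx0
        have : (cfVal a)⁻¹ = ((a 0 : ℕ) : ℝ) + cfVal (fun k => a (k+1)) := by
          rw [hrec, inv_inv]
        rw [← this, heq]
        rw [inv_div]
      have : cfVal (fun k => a (k+1)) = ((q - (a 0 : ℕ) * p : ℤ) : ℝ) / ((p.toNat : ℕ) : ℝ) := by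
        push_cast
        rw [show ((p.toNat:ℕ):ℝ) = (p:ℝ) by exact_mod_cast Int.toNat_of_nonneg (by exact_mod_cast hp0.le)]
        have : cfVal (fun k => a (k+1)) = (q:ℝ)/(p:ℝ) - ((a 0 : ℕ) : ℝ) := by linarith
        rw [this]
        field_simp
      exact ih p.toNat hplt _ _ hpnat this
  have hd : 0 < r.den := r.pos
  exact key r.den a r.num hd (by rw [← hr, Rat.cast_def])

end CFAux
namespace CFAux

lemma cfVal_inv (a : ℕ → ℕ+) : (cfVal a)⁻¹ = ((a 0 : ℕ) : ℝ) + cfVal (fun k => a (k+1)) := by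
  rw [cfVal_rec a, inv_inv]

lemma gaussMap_cfVal (a : ℕ → ℕ+) : gaussMap (cfVal a) = cfVal (fun k => a (k+1)) := by
  have hx0 := cfVal_pos a
  rw [gaussMap, if_neg (ne_of_gt hx0), cfVal_inv]
  have : ((a 0 : ℕ) : ℝ) = ((((a 0 : ℕ) : ℤ)) : ℝ) := by push_cast; ring
  rw [this, Int.fract_intCast_add, Int.fract_eq_self.2
    ⟨(cfVal_pos _).le, cfVal_lt_one _⟩]

lemma cfDigit_cfVal_zero (a : ℕ → ℕ+) : cfDigit (cfVal a) 0 = (a 0 : ℕ) := by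
  have h1 := cfVal_pos (fun k => a (k+1))
  have h2 := cfVal_lt_one (fun k => a (k+1))
  rw [cfDigit, Function.iterate_zero_apply, cfVal_inv]
  rw [Nat.floor_eq_iff (by positivity)]
  constructor
  · push_cast; linarith
  · push_cast; linarith

lemma iterate_gaussMap_cfVal (k : ℕ) (a : ℕ → ℕ+) :
    gaussMap^[k] (cfVal a) = cfVal (fun j => a (j + k)) := by
  induction k generalizing a with
  | zero => simp
  | succ k ih =>
    rw [Function.iterate_succ_apply, gaussMap_cfVal, ih]
    rfl

lemma cfDigit_cfVal (a : ℕ → ℕ+) (k : ℕ) : cfDigit (cfVal a) k = (a k : ℕ) := by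
  rw [cfDigit, iterate_gaussMap_cfVal]
  have := cfDigit_cfVal_zero (fun j => a (j + k))
  rw [cfDigit, Function.iterate_zero_apply] at this
  simpa using this

-- Facts about gaussMap on irrationals of (0,1)
lemma gauss_step {x : ℝ} (hx : x ∈ Set.Ioo (0:ℝ) 1) (hirr : Irrational x) :
    gaussMap x ∈ Set.Ioo (0:ℝ) 1 ∧ Irrational (gaussMap x) ∧
    x = ((cfDigit x 0 : ℝ) + gaussMap x)⁻¹ ∧ 1 ≤ cfDigit x 0 := by
  obtain ⟨hx0, hx1⟩ := hx
  have hinv1 : 1 < x⁻¹ := (one_lt_inv₀ hx0).2 hx1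
  have hinvirr : Irrational x⁻¹ := hirr.inv
  have hfl : (1:ℕ) ≤ ⌊x⁻¹⌋₊ := Nat.one_le_floor_iff _ |>.2 hinv1.le
  have hg : gaussMap x = Int.fract x⁻¹ := if_neg (ne_of_gt hx0)
  have hfr0 : 0 ≤ Int.fract x⁻¹ := Int.fract_nonneg _
  have hfr1 : Int.fract x⁻¹ < 1 := Int.fract_lt_one _
  have hfrirr : Irrational (Int.fract x⁻¹) := by
    rw [Int.fract]
    exact hinvirr.sub_intCast _
  have hfrne : Int.fract x⁻¹ ≠ 0 := by
    intro h; exact hfrirr.ne_rat 0 (by rw [h]; norm_num)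
  have hio : gaussMap x ∈ Set.Ioo (0:ℝ) 1 := by
    rw [hg]; exact ⟨lt_of_le_of_ne hfr0 (Ne.symm hfrne), hfr1⟩
  refine ⟨hio, by rw [hg]; exact hfrirr, ?_, hfl⟩
  have hfloor_eq : ((⌊x⁻¹⌋₊ : ℕ) : ℝ) = ((⌊x⁻¹⌋ : ℤ) : ℝ) := by
    rw [natCast_floor_eq_intCast_floor (by positivity)]
  have : (cfDigit x 0 : ℝ) + gaussMap x = x⁻¹ := by
    rw [cfDigit, Function.iterate_zero_apply, hg, Int.fract, hfloor_eq]
    ring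
  rw [this, inv_inv]

end CFAux
namespace CFAux

lemma cfDigit_gauss (x : ℝ) (k : ℕ) : cfDigit (gaussMap x) k = cfDigit x (k+1) := by
  rw [cfDigit, cfDigit, Function.iterate_succ_apply]

lemma dist_le_prod : ∀ n : ℕ, ∀ y z : ℝ, y ∈ Set.Ioo (0:ℝ) 1 → Irrational y →
    z ∈ Set.Ioo (0:ℝ) 1 → Irrational z → (∀ k < n, cfDigit y k = cfDigit z k) →
    |y - z| ≤ ∏ k ∈ Finset.range n, (((cfDigit z k : ℕ) : ℝ)^2)⁻¹ := by
  intro n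
  induction n with
  | zero =>
    intro y z hy _ hz _ _
    simp only [Finset.range_zero, Finset.prod_empty]
    rw [abs_sub_le_iff]
    constructor <;> nlinarith [hy.1, hy.2, hz.1, hz.2]
  | succ n ih =>
    intro y z hy hyirr hz hzirr hdig
    obtain ⟨hTy, hTyirr, hyeq, hdy1⟩ := gauss_step hy hyirr
    obtain ⟨hTz, hTzirr, hzeq, hdz1⟩ := gauss_step hz hzirr
    have hd0 : cfDigit y 0 = cfDigit z 0 := hdig 0 (Nat.succ_pos n)
    set d : ℕ := cfDigit z 0 with hdd
    have hd1 : (1:ℝ) ≤ (d:ℝ) := by exact_mod_cast hdz1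
    have hdigT : ∀ k < n, cfDigit (gaussMap y) k = cfDigit (gaussMap z) k := by
      intro k hk
      rw [cfDigit_gauss, cfDigit_gauss]
      exact hdig (k+1) (by omega)
    have ihT := ih (gaussMap y) (gaussMap z) hTy hTyirr hTz hTzirr hdigT
    have hprodT : ∏ k ∈ Finset.range n, (((cfDigit (gaussMap z) k : ℕ) : ℝ)^2)⁻¹ =
        ∏ k ∈ Finset.range n, (((cfDigit z (k+1) : ℕ) : ℝ)^2)⁻¹ := by
      apply Finset.prod_congr rfl; intro k _; rw [cfDigit_gauss]
    rw [hprodT] at ihT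
    have hsplit : ∏ k ∈ Finset.range (n+1), (((cfDigit z k : ℕ) : ℝ)^2)⁻¹ =
        (∏ k ∈ Finset.range n, (((cfDigit z (k+1) : ℕ) : ℝ)^2)⁻¹) * (((d:ℕ):ℝ)^2)⁻¹ := by
      rw [Finset.prod_range_succ']
    rw [hsplit]
    have hy' : y = ((d:ℝ) + gaussMap y)⁻¹ := by rw [hd0] at hyeq; exact hyeq
    have hz' : z = ((d:ℝ) + gaussMap z)⁻¹ := hzeq
    have hden_y : (0:ℝ) < (d:ℝ) + gaussMap y := by have := hTy.1; linarith
    have hden_z : (0:ℝ) < (d:ℝ) + gaussMap z := by have := hTz.1; linarith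
    have habs : |y - z| = |gaussMap y - gaussMap z| /
        (((d:ℝ) + gaussMap y) * ((d:ℝ) + gaussMap z)) := by
      conv_lhs => rw [hy', hz']
      rw [inv_sub_inv (ne_of_gt hden_y) (ne_of_gt hden_z), abs_div]
      congr 1
      · rw [← abs_neg]; ring_nf
      · rw [abs_mul, abs_of_pos hden_y, abs_of_pos hden_z]
    have hden2 : (d:ℝ)^2 ≤ ((d:ℝ) + gaussMap y) * ((d:ℝ) + gaussMap z) := by
      have := hTy.1; have := hTz.1; nlinarith
    have hd2pos : (0:ℝ) < (d:ℝ)^2 := by positivity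
    rw [habs]
    calc |gaussMap y - gaussMap z| / (((d:ℝ) + gaussMap y) * ((d:ℝ) + gaussMap z))
        ≤ |gaussMap y - gaussMap z| / (d:ℝ)^2 :=
          div_le_div_of_nonneg_left (abs_nonneg _) hd2pos hden2
      _ ≤ (∏ k ∈ Finset.range n, (((cfDigit z (k+1) : ℕ) : ℝ)^2)⁻¹) * (((d:ℕ):ℝ)^2)⁻¹ := by
          rw [div_eq_mul_inv]
          exact mul_le_mul_of_nonneg_right ihT (by positivity)

lemma diam_levelCyl {x : ℝ} (n : ℕ) (hx : x ∈ Set.Ioo (0:ℝ) 1) (hxirr : Irrational x) :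
    Metric.diam (levelCyl n x) ≤ ∏ k ∈ Finset.range n, (((cfDigit x k : ℕ) : ℝ)^2)⁻¹ := by
  apply Metric.diam_le_of_forall_dist_le
  · apply Finset.prod_nonneg; intro k _; positivity
  · rintro y ⟨hy, hyirr, hydig⟩ z ⟨hz, hzirr, hzdig⟩
    rw [Real.dist_eq]
    have hdig : ∀ k < n, cfDigit y k = cfDigit z k := fun k hk =>
      (hydig k hk).trans (hzdig k hk).symm
    have := dist_le_prod n y z hy hyirr hz hzirr hdig
    calc |y - z| ≤ ∏ k ∈ Finset.range n, (((cfDigit z k : ℕ) : ℝ)^2)⁻¹ := this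
      _ = ∏ k ∈ Finset.range n, (((cfDigit x k : ℕ) : ℝ)^2)⁻¹ := by
          apply Finset.prod_congr rfl; intro k hk
          rw [hzdig k (Finset.mem_range.1 hk)]

end CFAux
namespace CFAux

lemma measurable_coord (k : ℕ) : Measurable (fun a : ℕ → ℕ+ => a k) :=
  measurable_pi_apply k

lemma measurable_of_pnat {α : Type*} [MeasurableSpace α] (f : ℕ+ → α) : Measurable f :=
  measurable_from_top

lemma measurable_cfApprox (n : ℕ) : Measurable (cfApprox n) := by
  induction n with
  | zero => exact measurable_const
  | succ n ih =>
    have h1 : Measurable (fun a : ℕ → ℕ+ => (((a 0 : ℕ)) : ℝ)) :=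
      (measurable_of_pnat (fun i : ℕ+ => ((i : ℕ) : ℝ))).comp (measurable_coord 0)
    have h2 : Measurable (fun a : ℕ → ℕ+ => (fun k => a (k+1))) :=
      measurable_pi_lambda _ (fun k => measurable_coord (k+1))
    exact ((h1.add (ih.comp h2)).inv)

lemma measurable_cfVal : Measurable cfVal :=
  measurable_of_tendsto_metrizable measurable_cfApprox
    (tendsto_pi_nhds.2 tendsto_cfVal)

/-- weight of a set of digits -/
noncomputable def wt (p : ℕ+ → ℝ) (B : Set ℕ+) : ℝ≥0∞ :=
  ∑' i : ℕ+, Set.indicator B (fun i => ENNReal.ofReal (p i)) i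

lemma tsum_prod_fin : ∀ (n : ℕ) (g : ℕ → ℕ+ → ℝ≥0∞),
    ∑' v : Fin n → ℕ+, ∏ k : Fin n, g k (v k) = ∏ k ∈ Finset.range n, ∑' i : ℕ+, g k i := by
  intro n
  induction n with
  | zero =>
    intro g
    simp only [Finset.range_zero, Finset.prod_empty, Finset.univ_eq_empty]
    rw [tsum_eq_single (default : Fin 0 → ℕ+) (fun v hv => absurd (Subsingleton.elim v default) hv)]
  | succ n ih =>
    intro g
    rw [← (Fin.consEquiv (fun _ : Fin (n+1) => ℕ+)).tsum_eq]
    calc ∑' (x : ℕ+ × (Fin n → ℕ+)), ∏ k : Fin (n+1), g k ((Fin.consEquiv (fun _ => ℕ+)) x k)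
        = ∑' (i : ℕ+) (w : Fin n → ℕ+), g 0 i * ∏ k : Fin n, g (k+1) (w k) := by
          rw [ENNReal.tsum_prod']
          congr 1; funext i; congr 1; funext w
          rw [Fin.prod_univ_succ]
          simp [Fin.consEquiv, Fin.val_succ]
      _ = (∑' i : ℕ+, g 0 i) * ∑' w : Fin n → ℕ+, ∏ k : Fin n, g (k+1) (w k) := by
          rw [← ENNReal.tsum_mul_right]
          congr 1; funext i
          rw [ENNReal.tsum_mul_left]
      _ = ∏ k ∈ Finset.range (n+1), ∑' i : ℕ+, g k i := by
          rw [ih (fun k => g (k+1)), Finset.prod_range_succ']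
          ring

theorem box_measure (p : ℕ+ → ℝ) (m : Measure (ℕ → ℕ+)) (hp : IsProbVec p)
    (hb : IsBernoulli p m) (n : ℕ) (B : ℕ → Set ℕ+) :
    m {a | ∀ k < n, a k ∈ B k} = ∏ k ∈ Finset.range n, wt p (B k) := by
  classical
  set c : (Fin n → ℕ+) → Set (ℕ → ℕ+) := fun v =>
    if ∀ k : Fin n, v k ∈ B (k : ℕ) then {a | ∀ k : Fin n, a (k : ℕ) = v k} else ∅ with hc
  have hbox : {a : ℕ → ℕ+ | ∀ k < n, a k ∈ B k} = ⋃ v : Fin n → ℕ+, c v := by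
    ext a
    simp only [Set.mem_setOf_eq, Set.mem_iUnion, hc]
    constructor
    · intro h
      refine ⟨fun k => a (k : ℕ), ?_⟩
      have hcond : ∀ k : Fin n, (fun k : Fin n => a (k : ℕ)) k ∈ B (k : ℕ) :=
        fun k => h k.1 k.2
      simp only [if_pos hcond]
      exact fun k => rfl
    · rintro ⟨v, hv⟩ k hk
      by_cases hcond : ∀ k : Fin n, v k ∈ B (k : ℕ)
      · rw [if_pos hcond] at hv
        have := hv ⟨k, hk⟩
        simp only [Set.mem_setOf_eq] at this
        rw [this]
        exact hcond ⟨k, hk⟩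
      · rw [if_neg hcond] at hv; exact absurd hv (Set.notMem_empty a)
  have hmeas : ∀ v : Fin n → ℕ+, MeasurableSet (c v) := by
    intro v
    simp only [hc]
    split_ifs
    · have : {a : ℕ → ℕ+ | ∀ k : Fin n, a (k:ℕ) = v k}
          = ⋂ k : Fin n, (fun a : ℕ → ℕ+ => a (k:ℕ)) ⁻¹' {v k} := by
        ext a; simp [Set.mem_iInter, Set.mem_preimage]
      rw [this]
      exact MeasurableSet.iInter fun k =>
        (measurable_coord (k : ℕ)) (MeasurableSet.singleton (v k))
    · exact MeasurableSet.empty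
  have hdisj : Pairwise (Function.onFun Disjoint c) := by
    intro v w hvw
    rw [Function.onFun, Set.disjoint_left]
    intro a hav haw
    apply hvw
    simp only [hc] at hav haw
    split_ifs at hav haw with h1 h2
    · funext k
      have h3 := hav k
      have h4 := haw k
      rw [← h3, ← h4]
    · exact absurd haw (Set.notMem_empty a)
    · exact absurd hav (Set.notMem_empty a)
    · exact absurd hav (Set.notMem_empty a)
  have hcyl : ∀ v : Fin n → ℕ+,
      m (c v) = ∏ k : Fin n, Set.indicator (B (k:ℕ)) (fun i => ENNReal.ofReal (p i)) (v k) := by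
    intro v
    by_cases hcond : ∀ k : Fin n, v k ∈ B (k : ℕ)
    · simp only [hc, if_pos hcond]
      set ext : ℕ → ℕ+ := fun j => if h : j < n then v ⟨j, h⟩ else 1 with hext
      have hset : {a : ℕ → ℕ+ | ∀ k : Fin n, a (k : ℕ) = v k} = {a | ∀ k < n, a k = ext k} := by
        ext a
        simp only [Set.mem_setOf_eq, hext]
        constructor
        · intro h k hk; rw [dif_pos hk]; exact h ⟨k, hk⟩
        · intro h k; have := h (k : ℕ) k.isLt; rwa [dif_pos k.isLt] at this
      rw [hset, hb n ext]
      rw [ENNReal.ofReal_prod_of_nonneg (fun k _ => hp.1 _)]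
      rw [← Fin.prod_univ_eq_prod_range (fun k => ENNReal.ofReal (p (ext k))) n]
      apply Finset.prod_congr rfl
      intro k _
      rw [Set.indicator_of_mem (hcond k)]
      congr 1
      simp only [hext, dif_pos k.isLt]
    · simp only [hc, if_neg hcond]
      push_neg at hcond
      obtain ⟨k, hk⟩ := hcond
      rw [measure_empty]
      symm
      apply Finset.prod_eq_zero (Finset.mem_univ k)
      rw [Set.indicator_of_notMem hk]
  rw [hbox, measure_iUnion hdisj hmeas]
  calc ∑' v : Fin n → ℕ+, m (c v)
      = ∑' v : Fin n → ℕ+, ∏ k : Fin n,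
          Set.indicator (B (k:ℕ)) (fun i => ENNReal.ofReal (p i)) (v k) := by
        congr 1; funext v; exact hcyl v
    _ = ∏ k ∈ Finset.range n, wt p (B k) :=
        tsum_prod_fin n (fun k i => Set.indicator (B k) (fun i => ENNReal.ofReal (p i)) i)

end CFAux
namespace CFAux

variable {p : ℕ+ → ℝ} {m : MeasureTheory.Measure (ℕ → ℕ+)}

lemma wt_univ (hp : IsProbVec p) : wt p Set.univ = 1 := by
  rw [wt]
  simp only [Set.indicator_univ]
  rw [← ENNReal.ofReal_tsum_of_nonneg hp.1 hp.2.summable, hp.2.tsum_eq, ENNReal.ofReal_one]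

lemma wt_le_one (hp : IsProbVec p) (B : Set ℕ+) : wt p B ≤ 1 := by
  rw [← wt_univ hp, wt, wt]
  apply ENNReal.tsum_le_tsum
  intro i
  classical
  by_cases h : i ∈ B
  · rw [Set.indicator_of_mem h, Set.indicator_univ]
  · rw [Set.indicator_of_notMem h]; exact zero_le

lemma wt_add_compl (hp : IsProbVec p) (B : Set ℕ+) : wt p B + wt p Bᶜ = 1 := by
  rw [wt, wt, ← ENNReal.tsum_add]
  rw [← wt_univ hp, wt]
  congr 1
  funext i
  simp only [Set.indicator_univ]
  classical
  by_cases h : i ∈ B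
  · rw [Set.indicator_of_mem h, Set.indicator_of_notMem (by simpa using h), add_zero]
  · rw [Set.indicator_of_notMem h, Set.indicator_of_mem (by simpa using h), zero_add]

lemma wt_compl (hp : IsProbVec p) (B : Set ℕ+) : wt p Bᶜ = 1 - wt p B := by
  have h := wt_add_compl hp B
  have hfin : wt p B ≠ ⊤ := ne_top_of_le_ne_top ENNReal.one_ne_top (wt_le_one hp B)
  rw [← h, add_comm, ENNReal.add_sub_cancel_right hfin]

lemma coord_dist (hp : IsProbVec p) (hb : IsBernoulli p m) (n : ℕ) (B : Set ℕ+) :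
    m {a | a n ∈ B} = wt p B := by
  classical
  have hset : {a : ℕ → ℕ+ | a n ∈ B} = {a | ∀ k < n + 1, a k ∈ (fun k => if k = n then B else Set.univ) k} := by
    ext a
    simp only [Set.mem_setOf_eq]
    constructor
    · intro h k _
      by_cases hk : k = n
      · rw [if_pos hk, hk]; exact h
      · rw [if_neg hk]; trivial
    · intro h
      have := h n (by omega)
      rwa [if_pos rfl] at this
  rw [hset, box_measure p m hp hb (n+1) _]
  have : ∀ k ∈ Finset.range (n+1), wt p (if k = n then B else Set.univ) = if k = n then wt p B else 1 := by
    intro k _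
    by_cases hk : k = n
    · rw [if_pos hk, if_pos hk]
    · rw [if_neg hk, if_neg hk, wt_univ hp]
  rw [Finset.prod_congr rfl this, Finset.prod_ite_eq' (Finset.range (n+1)) n (fun _ => wt p B)]
  rw [if_pos (Finset.self_mem_range_succ n)]

lemma tail_zero (hp : IsProbVec p) (hm : MeasureTheory.IsProbabilityMeasure m)
    (hb : IsBernoulli p m) (R : ℕ → ℝ)
    (hdiv : ∑' k : ℕ, wt p {i : ℕ+ | R k ≤ ((i : ℕ) : ℝ)} = ⊤) (j : ℕ) :
    m {a | ∀ k, j ≤ k → ¬ (R k ≤ ((a k : ℕ) : ℝ))} = 0 := by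
  classical
  set Bset : ℕ → Set ℕ+ := fun k => {i : ℕ+ | R k ≤ ((i : ℕ) : ℝ)} with hBset
  set w : ℕ → ℝ≥0∞ := fun k => wt p (Bset k) with hw
  have hwle : ∀ k, w k ≤ 1 := fun k => wt_le_one hp _
  have hwne : ∀ k, w k ≠ ⊤ := fun k => ne_top_of_le_ne_top ENNReal.one_ne_top (hwle k)
  -- bound by the box over [j, N)
  have hbound : ∀ N : ℕ, m {a | ∀ k, j ≤ k → ¬ (R k ≤ ((a k : ℕ) : ℝ))}
      ≤ ∏ k ∈ Finset.Ico j N, (1 - w k) := by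
    intro N
    have hsub : {a : ℕ → ℕ+ | ∀ k, j ≤ k → ¬ (R k ≤ ((a k : ℕ) : ℝ))}
        ⊆ {a | ∀ k < N, a k ∈ (fun k => if j ≤ k then (Bset k)ᶜ else Set.univ) k} := by
      intro a ha k _
      show a k ∈ (if j ≤ k then (Bset k)ᶜ else Set.univ)
      by_cases hk : j ≤ k
      · rw [if_pos hk]; exact ha k hk
      · rw [if_neg hk]; trivial
    refine (MeasureTheory.measure_mono hsub).trans ?_
    rw [box_measure p m hp hb N _]
    have hsplit : ∀ k ∈ Finset.range N, wt p (if j ≤ k then (Bset k)ᶜ else Set.univ)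
        = if j ≤ k then (1 - w k) else 1 := by
      intro k _
      by_cases hk : j ≤ k
      · rw [if_pos hk, if_pos hk, wt_compl hp]
      · rw [if_neg hk, if_neg hk, wt_univ hp]
    rw [Finset.prod_congr rfl hsplit]
    rw [Finset.range_eq_Ico]
    by_cases hjN : j ≤ N
    · rw [← Finset.prod_Ico_consecutive _ (Nat.zero_le j) hjN]
      have h1 : ∏ k ∈ Finset.Ico 0 j, (if j ≤ k then (1 - w k) else 1) = 1 := by
        apply Finset.prod_eq_one
        intro k hk
        rw [if_neg (by simp at hk; omega)]
      have h2 : ∏ k ∈ Finset.Ico j N, (if j ≤ k then (1 - w k) else 1)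
          = ∏ k ∈ Finset.Ico j N, (1 - w k) := by
        apply Finset.prod_congr rfl
        intro k hk
        rw [if_pos (by simp at hk; omega)]
      rw [h1, h2, one_mul]
    · have h3 : Finset.Ico j N = ∅ := by
        rw [Finset.Ico_eq_empty]; omega
      rw [h3, Finset.prod_empty]
      apply Finset.prod_le_one (fun k _ => zero_le)
      intro k hk
      split_ifs
      · exact tsub_le_self
      · exact le_refl 1
  -- each factor is at most exp(-(w k).toReal)
  have hfac : ∀ k, (1 : ℝ≥0∞) - w k ≤ ENNReal.ofReal (Real.exp (-(w k).toReal)) := by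
    intro k
    rcases eq_or_lt_of_le (hwle k) with heq | hlt
    · rw [heq]; simp
    · have hq : (w k).toReal ≤ 1 := by
        rw [← ENNReal.toReal_one]
        exact ENNReal.toReal_mono ENNReal.one_ne_top (hwle k)
      have hq0 : 0 ≤ (w k).toReal := ENNReal.toReal_nonneg
      have h1 : (1 : ℝ≥0∞) - w k = ENNReal.ofReal (1 - (w k).toReal) := by
        rw [ENNReal.ofReal_sub _ hq0, ENNReal.ofReal_one, ENNReal.ofReal_toReal (hwne k)]
      rw [h1]
      apply ENNReal.ofReal_le_ofReal
      linarith [Real.add_one_le_exp (-(w k).toReal)]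
  have hprod : ∀ N, ∏ k ∈ Finset.Ico j N, (1 - w k)
      ≤ ENNReal.ofReal (Real.exp (-(∑ k ∈ Finset.Ico j N, (w k).toReal))) := by
    intro N
    calc ∏ k ∈ Finset.Ico j N, (1 - w k)
        ≤ ∏ k ∈ Finset.Ico j N, ENNReal.ofReal (Real.exp (-(w k).toReal)) :=
          Finset.prod_le_prod' (fun k _ => hfac k)
      _ = ENNReal.ofReal (∏ k ∈ Finset.Ico j N, Real.exp (-(w k).toReal)) := by
          rw [ENNReal.ofReal_prod_of_nonneg (fun k _ => (Real.exp_pos _).le)]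
      _ = ENNReal.ofReal (Real.exp (-(∑ k ∈ Finset.Ico j N, (w k).toReal))) := by
          rw [← Real.exp_sum]
          congr 1
          rw [Finset.sum_neg_distrib]
  -- the partial sums over Ico j N are unbounded
  have hsum : ∀ M : ℝ, ∃ N, M ≤ ∑ k ∈ Finset.Ico j N, (w k).toReal := by
    intro M
    have h1 : (⨆ s : Finset ℕ, ∑ k ∈ s, w k) = ⊤ := by
      rw [← ENNReal.tsum_eq_iSup_sum]; exact hdiv
    have hlt : ENNReal.ofReal (M + j) < ⨆ s : Finset ℕ, ∑ k ∈ s, w k := by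
      rw [h1]; exact ENNReal.ofReal_lt_top
    obtain ⟨s, hs⟩ := lt_iSup_iff.mp hlt
    set N : ℕ := max (s.sup id + 1) j with hN
    have hjN : j ≤ N := le_max_right _ _
    have hsN : s ⊆ Finset.range N := by
      intro x hx
      rw [Finset.mem_range]
      have := Finset.le_sup (f := id) hx
      simp only [id] at this
      omega
    refine ⟨N, ?_⟩
    have hS : ENNReal.ofReal (M + j) < ∑ k ∈ Finset.range N, w k :=
      hs.trans_le (Finset.sum_le_sum_of_subset hsN)
    rw [Finset.range_eq_Ico, ← Finset.sum_Ico_consecutive _ (Nat.zero_le j) hjN] at hS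
    have hfront : ∑ k ∈ Finset.Ico 0 j, w k ≤ (j : ℝ≥0∞) := by
      calc ∑ k ∈ Finset.Ico 0 j, w k ≤ ∑ _k ∈ Finset.Ico 0 j, (1:ℝ≥0∞) :=
            Finset.sum_le_sum (fun k _ => hwle k)
        _ = (j : ℝ≥0∞) := by simp
    have htailne : ∑ k ∈ Finset.Ico j N, w k ≠ ⊤ := by
      refine (lt_of_le_of_lt (Finset.sum_le_sum (fun k _ => hwle k)) ?_).ne
      simp only [Finset.sum_const, nsmul_eq_mul, mul_one]
      exact ENNReal.natCast_lt_top _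
    have htr : ∑ k ∈ Finset.Ico j N, (w k).toReal = (∑ k ∈ Finset.Ico j N, w k).toReal := by
      rw [ENNReal.toReal_sum (fun k _ => hwne k)]
    rw [htr]
    by_cases hM : M ≤ 0
    · exact hM.trans ENNReal.toReal_nonneg
    · push_neg at hM
      have hS2 : ENNReal.ofReal (M + j) < (j : ℝ≥0∞) + ∑ k ∈ Finset.Ico j N, w k :=
        hS.trans_le (add_le_add hfront le_rfl)
      have hfin : ((j : ℝ≥0∞) + ∑ k ∈ Finset.Ico j N, w k) ≠ ⊤ := by
        simp [htailne, ENNReal.add_ne_top]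
      have := ENNReal.toReal_mono hfin hS2.le
      rw [ENNReal.toReal_ofReal (by positivity), ENNReal.toReal_add (by simp) htailne] at this
      simp only [ENNReal.toReal_natCast] at this
      linarith
  -- conclude
  have hle : ∀ M : ℝ, m {a | ∀ k, j ≤ k → ¬ (R k ≤ ((a k : ℕ) : ℝ))}
      ≤ ENNReal.ofReal (Real.exp (-M)) := by
    intro M
    obtain ⟨N, hN⟩ := hsum M
    refine (hbound N).trans ((hprod N).trans ?_)
    apply ENNReal.ofReal_le_ofReal
    apply Real.exp_le_exp.2
    linarith
  refine le_antisymm ?_ (zero_le)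
  refine ENNReal.le_of_forall_pos_le_add (fun ε hε _ => ?_)
  rw [zero_add]
  have hεpos : (0:ℝ) < (ε:ℝ) := hε
  calc m {a | ∀ k, j ≤ k → ¬ (R k ≤ ((a k : ℕ) : ℝ))}
      ≤ ENNReal.ofReal (Real.exp (-(-Real.log (ε:ℝ)))) := hle _
    _ = ENNReal.ofReal (ε:ℝ) := by rw [neg_neg, Real.exp_log hεpos]
    _ = (ε : ℝ≥0∞) := ENNReal.ofReal_coe_nnreal

end CFAux
namespace CFAux

instance : MeasurableSingletonClass ℕ+ := ⟨fun _ => trivial⟩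

lemma cfVal_ge (a : ℕ → ℕ+) : (((a 0 : ℕ) : ℝ) + 1)⁻¹ ≤ cfVal a := by
  rw [cfVal_rec a]
  have h1 := one_le_coe (a 0)
  have h2 := (cfVal_mem (fun k => a (k+1))).2
  have h3 := (cfVal_mem (fun k => a (k+1))).1
  have h4 : ((a 0 : ℕ) : ℝ) + cfVal (fun k => a (k+1)) ≤ ((a 0 : ℕ) : ℝ) + 1 := by linarith
  exact inv_anti₀ (by positivity) h4

lemma neg_two_log_le (a : ℕ → ℕ+) :
    ENNReal.ofReal (-(2 * Real.log (cfVal a)))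
      ≤ ENNReal.ofReal (2 * Real.log 2) + 2 * ENNReal.ofReal (Real.log ((a 0 : ℕ) : ℝ)) := by
  have h1 := one_le_coe (a 0)
  have hx0 := cfVal_pos a
  have hge := cfVal_ge a
  have hlog : -Real.log (cfVal a) ≤ Real.log 2 + Real.log ((a 0 : ℕ) : ℝ) := by
    rw [← Real.log_inv]
    have hinv : (cfVal a)⁻¹ ≤ ((a 0 : ℕ) : ℝ) + 1 := by
      rw [← inv_inv (((a 0 : ℕ) : ℝ) + 1)]
      exact inv_anti₀ (by positivity) hge
    calc Real.log (cfVal a)⁻¹ ≤ Real.log (((a 0 : ℕ) : ℝ) + 1) :=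
          Real.log_le_log (by positivity) hinv
      _ ≤ Real.log (2 * ((a 0 : ℕ) : ℝ)) := Real.log_le_log (by positivity) (by linarith)
      _ = Real.log 2 + Real.log ((a 0 : ℕ) : ℝ) := Real.log_mul (by norm_num) (by linarith)
  have hl2 : (0:ℝ) ≤ Real.log 2 := Real.log_nonneg (by norm_num)
  have hla : (0:ℝ) ≤ Real.log ((a 0 : ℕ) : ℝ) := Real.log_nonneg h1
  calc ENNReal.ofReal (-(2 * Real.log (cfVal a)))
      ≤ ENNReal.ofReal (2 * Real.log 2 + 2 * Real.log ((a 0 : ℕ) : ℝ)) := by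
        apply ENNReal.ofReal_le_ofReal; linarith
    _ = ENNReal.ofReal (2 * Real.log 2) + ENNReal.ofReal (2 * Real.log ((a 0 : ℕ) : ℝ)) :=
        ENNReal.ofReal_add (by positivity) (by positivity)
    _ = ENNReal.ofReal (2 * Real.log 2) + 2 * ENNReal.ofReal (Real.log ((a 0 : ℕ) : ℝ)) := by
        congr 1
        rw [ENNReal.ofReal_mul (by norm_num : (0:ℝ) ≤ 2), ENNReal.ofReal_ofNat]

lemma wt_singleton (p : ℕ+ → ℝ) (hp : IsProbVec p) (m : MeasureTheory.Measure (ℕ → ℕ+))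
    (hb : IsBernoulli p m) (i : ℕ+) : m {a | a 0 = i} = ENNReal.ofReal (p i) := by
  have hset : {a : ℕ → ℕ+ | a 0 = i} = {a | ∀ k < 1, a k = (fun _ => i) k} := by
    ext a
    simp only [Set.mem_setOf_eq]
    constructor
    · intro h k hk; interval_cases k; exact h
    · intro h; exact h 0 (by norm_num)
  rw [hset, hb 1 (fun _ => i)]
  simp

lemma log_moment_infinite (p : ℕ+ → ℝ) (m : MeasureTheory.Measure (ℕ → ℕ+))
    (hp : IsProbVec p) (hm : MeasureTheory.IsProbabilityMeasure m) (hb : IsBernoulli p m)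
    (hlyap : ∫⁻ x, ENNReal.ofReal (-(2 * Real.log x)) ∂(m.map cfVal) = ⊤) :
    ∑' i : ℕ+, ENNReal.ofReal (Real.log ((i : ℕ) : ℝ)) * ENNReal.ofReal (p i) = ⊤ := by
  have hfmeas : Measurable (fun x : ℝ => ENNReal.ofReal (-(2 * Real.log x))) :=
    ENNReal.measurable_ofReal.comp ((Real.measurable_log.const_mul 2).neg)
  rw [MeasureTheory.lintegral_map hfmeas measurable_cfVal] at hlyap
  have hg : Measurable (fun a : ℕ → ℕ+ => ENNReal.ofReal (Real.log ((a 0 : ℕ) : ℝ))) :=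
    (measurable_of_pnat (fun i : ℕ+ => ENNReal.ofReal (Real.log ((i : ℕ) : ℝ)))).comp
      (measurable_coord 0)
  have hbound : ∫⁻ a, ENNReal.ofReal (-(2 * Real.log (cfVal a))) ∂m
      ≤ ENNReal.ofReal (2 * Real.log 2) +
        2 * ∫⁻ a, ENNReal.ofReal (Real.log ((a 0 : ℕ) : ℝ)) ∂m := by
    calc ∫⁻ a, ENNReal.ofReal (-(2 * Real.log (cfVal a))) ∂m
        ≤ ∫⁻ a, (ENNReal.ofReal (2 * Real.log 2)
            + 2 * ENNReal.ofReal (Real.log ((a 0 : ℕ) : ℝ))) ∂m :=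
          MeasureTheory.lintegral_mono (fun a => neg_two_log_le a)
      _ = ENNReal.ofReal (2 * Real.log 2) +
          2 * ∫⁻ a, ENNReal.ofReal (Real.log ((a 0 : ℕ) : ℝ)) ∂m := by
          rw [MeasureTheory.lintegral_add_left measurable_const,
            MeasureTheory.lintegral_const_mul 2 hg]
          simp [hm.measure_univ]
  have hI : ∫⁻ a, ENNReal.ofReal (Real.log ((a 0 : ℕ) : ℝ)) ∂m = ⊤ := by
    by_contra h
    have h2 : ENNReal.ofReal (2 * Real.log 2) +
        2 * ∫⁻ a, ENNReal.ofReal (Real.log ((a 0 : ℕ) : ℝ)) ∂m = ⊤ :=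
      top_le_iff.1 (hlyap ▸ hbound)
    exact (ENNReal.add_ne_top.2 ⟨ENNReal.ofReal_ne_top,
      ENNReal.mul_ne_top (by norm_num) h⟩) h2
  -- compute the integral as a sum
  have hcalc : ∫⁻ a, ENNReal.ofReal (Real.log ((a 0 : ℕ) : ℝ)) ∂m
      = ∑' i : ℕ+, ENNReal.ofReal (Real.log ((i : ℕ) : ℝ)) * ENNReal.ofReal (p i) := by
    have hstep : ∫⁻ a, ENNReal.ofReal (Real.log ((a 0 : ℕ) : ℝ)) ∂m
        = ∫⁻ i : ℕ+, ENNReal.ofReal (Real.log ((i : ℕ) : ℝ)) ∂(m.map (fun a : ℕ → ℕ+ => a 0)) :=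
      (MeasureTheory.lintegral_map (f := fun i : ℕ+ => ENNReal.ofReal (Real.log ((i:ℕ):ℝ)))
        (measurable_of_pnat _) (measurable_coord 0)).symm
    rw [hstep, MeasureTheory.lintegral_countable' _]
    congr 1
    funext i
    congr 1
    rw [MeasureTheory.Measure.map_apply (measurable_coord 0) (MeasurableSet.singleton i)]
    have : (fun a : ℕ → ℕ+ => a 0) ⁻¹' {i} = {a : ℕ → ℕ+ | a 0 = i} := rfl
    rw [this, wt_singleton p hp m hb i]
  rw [hcalc] at hI
  exact hI

lemma wt_diverge (p : ℕ+ → ℝ) (m : MeasureTheory.Measure (ℕ → ℕ+))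
    (hp : IsProbVec p) (hm : MeasureTheory.IsProbabilityMeasure m) (hb : IsBernoulli p m)
    (hlyap : ∫⁻ x, ENNReal.ofReal (-(2 * Real.log x)) ∂(m.map cfVal) = ⊤)
    (lam : ℝ) (hlam : 0 < lam) :
    ∑' k : ℕ, wt p {i : ℕ+ | Real.exp (lam * k) ≤ ((i : ℕ) : ℝ)} = ⊤ := by
  classical
  have hmom := log_moment_infinite p m hp hm hb hlyap
  set c : ℕ+ → ℕ := fun i => ⌊Real.log ((i:ℕ):ℝ) / lam⌋₊ + 1 with hcdef
  have hswap : ∑' k : ℕ, wt p {i : ℕ+ | Real.exp (lam * k) ≤ ((i : ℕ) : ℝ)}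
      = ∑' i : ℕ+, (c i : ℝ≥0∞) * ENNReal.ofReal (p i) := by
    rw [show (fun k : ℕ => wt p {i : ℕ+ | Real.exp (lam * k) ≤ ((i : ℕ) : ℝ)})
        = fun k : ℕ => ∑' i : ℕ+, Set.indicator {i : ℕ+ | Real.exp (lam * k) ≤ ((i : ℕ) : ℝ)}
            (fun i => ENNReal.ofReal (p i)) i from rfl]
    rw [ENNReal.tsum_comm]
    congr 1
    funext i
    have h1 : (1:ℝ) ≤ ((i:ℕ):ℝ) := one_le_coe i
    have hpos : (0:ℝ) < ((i:ℕ):ℝ) := by linarith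
    have hlog0 : 0 ≤ Real.log ((i:ℕ):ℝ) := Real.log_nonneg h1
    have hcond : ∀ k : ℕ, (Real.exp (lam * k) ≤ ((i : ℕ) : ℝ)) ↔ k < c i := by
      intro k
      rw [← Real.le_log_iff_exp_le hpos]
      constructor
      · intro h
        have : (k:ℝ) ≤ Real.log ((i:ℕ):ℝ) / lam := by
          rw [le_div_iff₀ hlam]; linarith [h]
        have := Nat.le_floor this
        simp only [hcdef]
        omega
      · intro h
        have hk : k ≤ ⌊Real.log ((i:ℕ):ℝ) / lam⌋₊ := by
          simp only [hcdef] at h; omega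
        have h2 : (k:ℝ) ≤ Real.log ((i:ℕ):ℝ) / lam :=
          le_trans (by exact_mod_cast hk) (Nat.floor_le (by positivity))
        calc lam * k ≤ lam * (Real.log ((i:ℕ):ℝ) / lam) := by
              apply mul_le_mul_of_nonneg_left h2 hlam.le
          _ = Real.log ((i:ℕ):ℝ) := by field_simp
    have hind : ∀ k : ℕ, Set.indicator {i : ℕ+ | Real.exp (lam * k) ≤ ((i : ℕ) : ℝ)}
        (fun i => ENNReal.ofReal (p i)) i = if k < c i then ENNReal.ofReal (p i) else 0 := by
      intro k
      by_cases h : Real.exp (lam * k) ≤ ((i : ℕ) : ℝ)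
      · rw [Set.indicator_of_mem
          (show i ∈ {j : ℕ+ | Real.exp (lam * k) ≤ ((j : ℕ) : ℝ)} from h), if_pos ((hcond k).1 h)]
      · rw [Set.indicator_of_notMem
          (show i ∉ {j : ℕ+ | Real.exp (lam * k) ≤ ((j : ℕ) : ℝ)} from h),
          if_neg (fun hh => h ((hcond k).2 hh))]
    rw [show (fun k : ℕ => Set.indicator {i : ℕ+ | Real.exp (lam * k) ≤ ((i : ℕ) : ℝ)}
        (fun i => ENNReal.ofReal (p i)) i)
        = fun k : ℕ => if k < c i then ENNReal.ofReal (p i) else 0 from funext hind]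
    rw [tsum_eq_sum (s := Finset.range (c i)) (fun k hk => by
      rw [if_neg (fun h => hk (Finset.mem_range.2 h))])]
    rw [Finset.sum_congr rfl (fun k hk => if_pos (Finset.mem_range.1 hk))]
    rw [Finset.sum_const, Finset.card_range, nsmul_eq_mul]
  rw [hswap]
  -- compare with the log moment
  have hcompare : ∀ i : ℕ+, ENNReal.ofReal (Real.log ((i:ℕ):ℝ)) * ENNReal.ofReal (p i)
      ≤ ENNReal.ofReal lam * ((c i : ℝ≥0∞) * ENNReal.ofReal (p i)) := by
    intro i
    rw [← mul_assoc]
    apply mul_le_mul_of_nonneg_right ?_ (zero_le)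
    have h1 : Real.log ((i:ℕ):ℝ) ≤ lam * (c i : ℝ) := by
      have h2 : Real.log ((i:ℕ):ℝ) / lam < (⌊Real.log ((i:ℕ):ℝ) / lam⌋₊ : ℝ) + 1 :=
        Nat.lt_floor_add_one _
      have : Real.log ((i:ℕ):ℝ) / lam < (c i : ℝ) := by
        rw [hcdef]; push_cast; linarith
      calc Real.log ((i:ℕ):ℝ) = lam * (Real.log ((i:ℕ):ℝ) / lam) := by field_simp
        _ ≤ lam * (c i : ℝ) := mul_le_mul_of_nonneg_left this.le hlam.le
    calc ENNReal.ofReal (Real.log ((i:ℕ):ℝ)) ≤ ENNReal.ofReal (lam * (c i : ℝ)) :=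
          ENNReal.ofReal_le_ofReal h1
      _ = ENNReal.ofReal lam * ENNReal.ofReal ((c i : ℝ)) := ENNReal.ofReal_mul hlam.le
      _ = ENNReal.ofReal lam * (c i : ℝ≥0∞) := by rw [ENNReal.ofReal_natCast]
  by_contra h
  have hfin : ∑' i : ℕ+, (c i : ℝ≥0∞) * ENNReal.ofReal (p i) ≠ ⊤ := h
  have : ∑' i : ℕ+, ENNReal.ofReal (Real.log ((i:ℕ):ℝ)) * ENNReal.ofReal (p i)
      ≤ ENNReal.ofReal lam * ∑' i : ℕ+, (c i : ℝ≥0∞) * ENNReal.ofReal (p i) := by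
    rw [← ENNReal.tsum_mul_left]
    exact ENNReal.tsum_le_tsum hcompare
  rw [hmom] at this
  exact (ENNReal.mul_ne_top ENNReal.ofReal_ne_top hfin) (top_le_iff.1 this)

end CFAux
/-- If the Lyapunov exponent `∫ log |T'| dμ_p = ∫ -2 log x dμ_p` is infinite, then
for every `λ > 0` the set `E_λ` has full `μ_p`-measure. -/
theorem Eset_full_of_infinite_lyapunov
    (p : ℕ+ → ℝ) (m : Measure (ℕ → ℕ+))
    (hp : IsProbVec p) (hm : IsProbabilityMeasure m) (hb : IsBernoulli p m)
    (hlyap : ∫⁻ x, ENNReal.ofReal (-(2 * Real.log x)) ∂(m.map cfVal) = ⊤) :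
    ∀ lam : ℝ, 0 < lam → (m.map cfVal) (Eset lam) = 1 := by
  intro lam hlam
  open CFAux in
  set G : Set (ℕ → ℕ+) :=
    {a | ∀ j : ℕ, ∃ k, j ≤ k ∧ Real.exp (lam * k) ≤ ((a k : ℕ) : ℝ)} with hG
  have hdiv := CFAux.wt_diverge p m hp hm hb hlyap lam hlam
  have htail : ∀ j : ℕ, m {a | ∀ k, j ≤ k → ¬ (Real.exp (lam * k) ≤ ((a k : ℕ) : ℝ))} = 0 :=
    fun j => CFAux.tail_zero hp hm hb (fun k => Real.exp (lam * k)) hdiv j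
  have hGc : Gᶜ ⊆ ⋃ j : ℕ, {a | ∀ k, j ≤ k → ¬ (Real.exp (lam * k) ≤ ((a k : ℕ) : ℝ))} := by
    intro a ha
    simp only [hG, Set.mem_compl_iff, Set.mem_setOf_eq] at ha
    push_neg at ha
    obtain ⟨j, hj⟩ := ha
    exact Set.mem_iUnion.2 ⟨j, fun k hk => not_le.2 (hj k hk)⟩
  have hGcnull : m Gᶜ = 0 :=
    measure_mono_null hGc (measure_iUnion_null htail)
  have hGmeas : MeasurableSet G := by
    have hGeq : G = ⋂ j : ℕ, ⋃ k : ℕ, ⋃ (_ : j ≤ k),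
        (fun a : ℕ → ℕ+ => a k) ⁻¹' {i : ℕ+ | Real.exp (lam * k) ≤ ((i : ℕ) : ℝ)} := by
      ext a
      simp only [hG, Set.mem_setOf_eq, Set.mem_iInter, Set.mem_iUnion, Set.mem_preimage]
      constructor
      · intro h j; obtain ⟨k, hk1, hk2⟩ := h j; exact ⟨k, hk1, hk2⟩
      · intro h j; obtain ⟨k, hk1, hk2⟩ := h j; exact ⟨k, hk1, hk2⟩
    rw [hGeq]
    exact MeasurableSet.iInter fun j => MeasurableSet.iUnion fun k =>
      MeasurableSet.iUnion fun _ => (CFAux.measurable_coord k) trivial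
  have hGfull : m G = 1 := by
    have h1 := measure_add_measure_compl (μ := m) hGmeas
    rw [hGcnull, add_zero, measure_univ] at h1
    exact h1
  -- G maps into Eset lam
  have hsub : G ⊆ cfVal ⁻¹' Eset lam := by
    intro a ha
    simp only [hG, Set.mem_setOf_eq] at ha
    have hx : cfVal a ∈ Set.Ioo (0:ℝ) 1 := ⟨CFAux.cfVal_pos a, CFAux.cfVal_lt_one a⟩
    refine ⟨hx, CFAux.cfVal_irrational a, ?_⟩
    intro j
    obtain ⟨k, hk1, hk2⟩ := ha (max j 1)
    have hkj : j ≤ k := le_trans (le_max_left _ _) hk1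
    have hk1' : 1 ≤ k := le_trans (le_max_right _ _) hk1
    refine ⟨k + 1, by omega, ?_⟩
    have hdiam := CFAux.diam_levelCyl (k+1) hx (CFAux.cfVal_irrational a)
    have hprod_eq : ∏ t ∈ Finset.range (k+1), (((cfDigit (cfVal a) t : ℕ) : ℝ)^2)⁻¹
        = ∏ t ∈ Finset.range (k+1), ((((a t : ℕ) : ℕ) : ℝ)^2)⁻¹ := by
      apply Finset.prod_congr rfl
      intro t _
      rw [CFAux.cfDigit_cfVal a t]
    rw [hprod_eq] at hdiam
    refine hdiam.trans ?_
    have hfacle1 : ∀ t : ℕ, ((((a t : ℕ) : ℕ) : ℝ)^2)⁻¹ ≤ 1 := by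
      intro t
      have h1 := CFAux.one_le_coe (a t)
      rw [inv_le_one_iff₀]; right; nlinarith
    have hsplit : ∏ t ∈ Finset.range (k+1), ((((a t : ℕ) : ℕ) : ℝ)^2)⁻¹
        = (∏ t ∈ Finset.range k, ((((a t : ℕ) : ℕ) : ℝ)^2)⁻¹) * ((((a k : ℕ) : ℕ) : ℝ)^2)⁻¹ :=
      Finset.prod_range_succ _ k
    have hak : (0:ℝ) < ((a k : ℕ) : ℝ) := by
      have := CFAux.one_le_coe (a k); linarith
    have hfk : ((((a k : ℕ) : ℕ) : ℝ)^2)⁻¹ ≤ Real.exp (-lam * ((k:ℝ)+1)) := by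
      have hexp_pos : (0:ℝ) < Real.exp (lam * k) := Real.exp_pos _
      have hsq : Real.exp (lam * k)^2 ≤ (((a k : ℕ) : ℝ))^2 := by nlinarith
      calc ((((a k : ℕ) : ℕ) : ℝ)^2)⁻¹ ≤ (Real.exp (lam * k)^2)⁻¹ :=
            inv_anti₀ (by positivity) hsq
        _ = Real.exp (-(2 * (lam * k))) := by
            rw [← Real.exp_nat_mul, Real.exp_neg]
            norm_num
        _ ≤ Real.exp (-lam * ((k:ℝ)+1)) := by
            apply Real.exp_le_exp.2
            have hk1r : (1:ℝ) ≤ (k:ℝ) := by exact_mod_cast hk1'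
            nlinarith
    calc ∏ t ∈ Finset.range (k+1), ((((a t : ℕ) : ℕ) : ℝ)^2)⁻¹
        ≤ ((((a k : ℕ) : ℕ) : ℝ)^2)⁻¹ := by
          rw [hsplit]
          apply mul_le_of_le_one_left (by positivity)
          exact Finset.prod_le_one (fun t _ => by positivity) (fun t _ => hfacle1 t)
      _ ≤ Real.exp (-lam * ((k:ℝ)+1)) := hfk
      _ = Real.exp (-lam * ((k+1 : ℕ) : ℝ)) := by push_cast; ring_nf
  have hpre : m (cfVal ⁻¹' Eset lam) = 1 :=
    le_antisymm prob_le_one (hGfull ▸ measure_mono hsub)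
  have hinst : IsProbabilityMeasure (m.map cfVal) :=
    Measure.isProbabilityMeasure_map CFAux.measurable_cfVal.aemeasurable
  exact le_antisymm prob_le_one
    (hpre ▸ Measure.le_map_apply CFAux.measurable_cfVal.aemeasurable _)
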